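/- Let G be a real m×n matrix, λ > 0, and suppose A ∈ ℝ^{m×r}, B ∈ ℝ^{n×r} satisfy λA = GB and λB = GᵀA. Then ‖ABᵀ‖_* = (‖A‖_F² + ‖B‖_F²)/2. -/

import Mathlib

open Matrix

/-- Squared Frobenius norm of a real matrix. -/
noncomputable def frobSq {m n : ℕ} (A : Matrix (Fin m) (Fin n) ℝ) : ℝ :=
  ∑ i, ∑ j, (A i j) ^ 2

/-- Frobenius norm. -/
noncomputable def frobNorm {m n : ℕ} (A : Matrix (Fin m) (Fin n) ℝ) : ℝ :=
  Real.sqrt (frobSq A)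

lemma wwT_posSemidef {m n : ℕ} (W : Matrix (Fin m) (Fin n) ℝ) :
    (W * Wᵀ).PosSemidef := by
  simpa [Matrix.conjTranspose_eq_transpose_of_trivial] using
    W.posSemidef_self_mul_conjTranspose

/-- The old `Matrix.PosSemidef.sqrt` (removed from Mathlib), spelled out. -/
noncomputable def posSemidefSqrt {n : ℕ} {M : Matrix (Fin n) (Fin n) ℝ} (hM : M.PosSemidef) :
    Matrix (Fin n) (Fin n) ℝ :=
  hM.1.eigenvectorUnitary.1 * diagonal ((↑) ∘ (√·) ∘ hM.1.eigenvalues) *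
    (star hM.1.eigenvectorUnitary : Matrix (Fin n) (Fin n) ℝ)

/-- Nuclear norm: trace of the PSD square root of `W * Wᵀ`. -/
noncomputable def nuclearNorm {m n : ℕ} (W : Matrix (Fin m) (Fin n) ℝ) : ℝ :=
  (posSemidefSqrt (wwT_posSemidef W)).trace

lemma posSemidefSqrt_eq_of_sq {k : ℕ} {P M : Matrix (Fin k) (Fin k) ℝ} (hP : P.PosSemidef)
    (hM : M.PosSemidef) (hPM : P * P = M) : posSemidefSqrt hM = P := by
  subst hPM
  have hPh : IsSelfAdjoint P := hP.1
  have h1 : posSemidefSqrt hM = cfc Real.sqrt (P * P) := by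
    rw [hM.1.cfc_eq]; rfl
  have h2 : P * P = cfc (fun x : ℝ => x * x) P := by
    rw [cfc_mul (fun x : ℝ => x) (fun x : ℝ => x) P, cfc_id' ℝ P]
  rw [h1, h2, ← cfc_comp' Real.sqrt (fun x : ℝ => x * x) P]
  have hspec : ∀ x ∈ spectrum ℝ P, 0 ≤ x := by
    intro x hx
    rw [hP.1.spectrum_real_eq_range_eigenvalues] at hx
    obtain ⟨i, rfl⟩ := hx
    exact hP.eigenvalues_nonneg i
  rw [cfc_congr (g := fun x : ℝ => x) (fun x hx => Real.sqrt_mul_self (hspec x hx)), cfc_id' ℝ P]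

/-- at a stationary point (`λA = GB`, `λB = GᵀA`, λ > 0),
the nuclear norm of `ABᵀ` equals `(‖A‖_F² + ‖B‖_F²)/2`. -/
theorem nuclearNorm_eq_of_stationary {m n r : ℕ}
    (G : Matrix (Fin m) (Fin n) ℝ) (lam : ℝ) (hlam : 0 < lam)
    (A : Matrix (Fin m) (Fin r) ℝ) (B : Matrix (Fin n) (Fin r) ℝ)
    (hA : lam • A = G * B) (hB : lam • B = Gᵀ * A) :
    nuclearNorm (A * Bᵀ) = (frobSq A + frobSq B) / 2 := by
  -- Step 1: AᵀA = BᵀB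
  have key : Aᵀ * A = Bᵀ * B := by
    have h1 : lam • (Aᵀ * A) = lam • (Bᵀ * B) := by
      calc lam • (Aᵀ * A) = (lam • A)ᵀ * A := by rw [transpose_smul, smul_mul]
        _ = (G * B)ᵀ * A := by rw [hA]
        _ = Bᵀ * (Gᵀ * A) := by rw [transpose_mul, Matrix.mul_assoc]
        _ = Bᵀ * (lam • B) := by rw [hB]
        _ = lam • (Bᵀ * B) := by rw [Matrix.mul_smul]
    exact smul_right_injective _ (ne_of_gt hlam) h1
  -- Step 2: (A*Bᵀ)(A*Bᵀ)ᵀ = (A*Aᵀ)^2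
  have hP : (A * Aᵀ).PosSemidef := wwT_posSemidef A
  have hsq : (A * Aᵀ) ^ 2 = (A * Bᵀ) * (A * Bᵀ)ᵀ := by
    rw [pow_two, transpose_mul, transpose_transpose]
    calc A * Aᵀ * (A * Aᵀ) = A * (Aᵀ * A) * Aᵀ := by
          simp only [Matrix.mul_assoc]
      _ = A * (Bᵀ * B) * Aᵀ := by rw [key]
      _ = A * Bᵀ * (B * Aᵀ) := by simp only [Matrix.mul_assoc]
  have hsqrt : posSemidefSqrt (wwT_posSemidef (A * Bᵀ)) = A * Aᵀ :=
    posSemidefSqrt_eq_of_sq hP _ (by rw [← pow_two]; exact hsq)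
  -- Step 3: traces
  have htrA : (A * Aᵀ).trace = frobSq A := by
    simp [Matrix.trace, Matrix.mul_apply, frobSq, Matrix.diag, sq]
  have htrB : (B * Bᵀ).trace = frobSq B := by
    simp [Matrix.trace, Matrix.mul_apply, frobSq, Matrix.diag, sq]
  have htrEq : frobSq A = frobSq B := by
    rw [← htrA, ← htrB, Matrix.trace_mul_comm, Matrix.trace_mul_comm B, key]
  rw [nuclearNorm, hsqrt, htrA, htrEq]
  ring
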